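/- Let ABCD be a rectangle with center O, let E ∈ AB and F ∈ CD with E, F, O collinear, and let G ∈ BC, H ∈ DA satisfy ∠EGB = ∠FGC and ∠EHA = ∠FHD. Then G, H, O are collinear. -/

import Mathlib

open Real EuclideanGeometry

private lemma inner_comb {V : Type*} [NormedAddCommGroup V] [InnerProductSpace ℝ V]
    {u v : V} (huv : (inner ℝ u v : ℝ) = 0) (a b c d : ℝ) :
    (inner ℝ (a • u + b • v) (c • u + d • v) : ℝ) = a * c * ‖u‖ ^ 2 + b * d * ‖v‖ ^ 2 := by
  have hvu : (inner ℝ v u : ℝ) = 0 := by rw [real_inner_comm]; exact huv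
  simp only [inner_add_left, inner_add_right, real_inner_smul_left, real_inner_smul_right,
    real_inner_self_eq_norm_sq, huv, hvu, mul_zero, add_zero, zero_add]
  ring

private lemma norm_comb {V : Type*} [NormedAddCommGroup V] [InnerProductSpace ℝ V]
    {u v : V} (huv : (inner ℝ u v : ℝ) = 0) (a b : ℝ) :
    ‖a • u + b • v‖ = Real.sqrt (a ^ 2 * ‖u‖ ^ 2 + b ^ 2 * ‖v‖ ^ 2) := by
  rw [← Real.sqrt_sq (norm_nonneg (a • u + b • v)), ← real_inner_self_eq_norm_sq,
    inner_comb huv]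
  ring_nf

private lemma cos_formula {V : Type*} [NormedAddCommGroup V] [InnerProductSpace ℝ V]
    {u v : V} (huv : (inner ℝ u v : ℝ) = 0) (a b c : ℝ) :
    Real.cos (InnerProductGeometry.angle (a • u + b • v) (c • v))
      = b * c * ‖v‖ ^ 2 /
        (Real.sqrt (a ^ 2 * ‖u‖ ^ 2 + b ^ 2 * ‖v‖ ^ 2) * Real.sqrt (c ^ 2 * ‖v‖ ^ 2)) := by
  have h0 : (c • v : V) = (0 : ℝ) • u + c • v := by rw [zero_smul, zero_add]
  rw [InnerProductGeometry.cos_angle, h0, inner_comb huv, norm_comb huv, norm_comb huv]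
  norm_num

private lemma key_scalar {p q t h : ℝ} (hp : 0 < p) (hq : 0 < q)
    (ht0 : 0 ≤ t) (ht1 : t ≤ 1) (hh0 : 0 ≤ h) (hh1 : h ≤ 1)
    (heq : h ^ 2 * q ^ 2 /
        (Real.sqrt (t ^ 2 * p ^ 2 + h ^ 2 * q ^ 2) * Real.sqrt (h ^ 2 * q ^ 2))
      = (1 - h) ^ 2 * q ^ 2 /
        (Real.sqrt ((1 - t) ^ 2 * p ^ 2 + (1 - h) ^ 2 * q ^ 2)
          * Real.sqrt ((1 - h) ^ 2 * q ^ 2))) :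
    h = t := by
  have hsq1 : Real.sqrt (h ^ 2 * q ^ 2) = h * q := by
    rw [show h ^ 2 * q ^ 2 = (h * q) ^ 2 by ring, Real.sqrt_sq (by positivity)]
  have hsq2 : Real.sqrt ((1 - h) ^ 2 * q ^ 2) = (1 - h) * q := by
    rw [show (1 - h) ^ 2 * q ^ 2 = ((1 - h) * q) ^ 2 by ring,
      Real.sqrt_sq (by nlinarith)]
  rw [hsq1, hsq2] at heq
  set N1 := Real.sqrt (t ^ 2 * p ^ 2 + h ^ 2 * q ^ 2) with hN1
  set N2 := Real.sqrt ((1 - t) ^ 2 * p ^ 2 + (1 - h) ^ 2 * q ^ 2) with hN2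
  have hN1sq : N1 ^ 2 = t ^ 2 * p ^ 2 + h ^ 2 * q ^ 2 := Real.sq_sqrt (by positivity)
  have hN2sq : N2 ^ 2 = (1 - t) ^ 2 * p ^ 2 + (1 - h) ^ 2 * q ^ 2 := Real.sq_sqrt (by positivity)
  rcases eq_or_lt_of_le hh0 with h0 | h0
  · -- h = 0 : contradiction
    exfalso
    rw [← h0] at heq
    have hN2pos : 0 < N2 := by
      rw [hN2]
      exact Real.sqrt_pos.mpr (by nlinarith [sq_nonneg ((1-t)*p), mul_pos (pow_pos (show (0:ℝ) < 1 - 0 by norm_num) 2) (pow_pos hq 2)])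
    have : 0 < (1 - 0) ^ 2 * q ^ 2 / (N2 * ((1 - 0) * q)) := by positivity
    rw [← heq] at this
    norm_num at this
  rcases eq_or_lt_of_le hh1 with h1 | h1
  · -- h = 1 : contradiction
    exfalso
    rw [h1] at heq
    have hN1pos : 0 < N1 := by
      rw [hN1]
      exact Real.sqrt_pos.mpr (by nlinarith [sq_nonneg (t*p), pow_pos hq 2])
    have : 0 < (1 : ℝ) ^ 2 * q ^ 2 / (N1 * (1 * q)) := by positivity
    rw [heq] at this
    norm_num at this
  -- main case 0 < h < 1

  have hh1' : 0 < 1 - h := by linarith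
  have hN1pos : 0 < N1 := by
    rw [hN1]
    exact Real.sqrt_pos.mpr (by nlinarith [sq_nonneg (t*p), mul_pos (pow_pos h0 2) (pow_pos hq 2)])
  have hN2pos : 0 < N2 := by
    rw [hN2]
    exact Real.sqrt_pos.mpr (by nlinarith [sq_nonneg ((1-t)*p), mul_pos (pow_pos hh1' 2) (pow_pos hq 2)])
  have e1 : h ^ 2 * q ^ 2 / (N1 * (h * q)) = h * q / N1 := by
    field_simp
  have e2 : (1 - h) ^ 2 * q ^ 2 / (N2 * ((1 - h) * q)) = (1 - h) * q / N2 := by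
    field_simp
  rw [e1, e2] at heq
  have hcross : h * q * N2 = (1 - h) * q * N1 :=
    (div_eq_div_iff hN1pos.ne' hN2pos.ne').mp heq
  have hsq := congrArg (· ^ 2) hcross
  have hexp : h ^ 2 * q ^ 2 * ((1 - t) ^ 2 * p ^ 2 + (1 - h) ^ 2 * q ^ 2)
      = (1 - h) ^ 2 * q ^ 2 * (t ^ 2 * p ^ 2 + h ^ 2 * q ^ 2) := by
    calc h ^ 2 * q ^ 2 * ((1 - t) ^ 2 * p ^ 2 + (1 - h) ^ 2 * q ^ 2)
        = (h * q * N2) ^ 2 := by rw [mul_pow, mul_pow, hN2sq]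
      _ = ((1 - h) * q * N1) ^ 2 := by rw [hsq]
      _ = (1 - h) ^ 2 * q ^ 2 * (t ^ 2 * p ^ 2 + h ^ 2 * q ^ 2) := by
          rw [mul_pow, mul_pow, hN1sq]
  have habs : (h * (1 - t)) ^ 2 = (t * (1 - h)) ^ 2 := by
    have hqp : q ^ 2 * p ^ 2 ≠ 0 := by positivity
    apply mul_left_cancel₀ hqp
    linear_combination hexp
  have hab : h * (1 - t) = t * (1 - h) :=
    (sq_eq_sq₀ (mul_nonneg hh0 (by linarith : (0:ℝ) ≤ 1 - t))
      (mul_nonneg ht0 (by linarith : (0:ℝ) ≤ 1 - h))).mp habs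
  linear_combination hab

/-- In a rectangle `ABCD` with center `O`, if `E ∈ AB`, `F ∈ CD` with `O` on segment `EF`,
`G ∈ BC` with `∠EGB = ∠FGC`, and `H ∈ DA` with `∠EHA = ∠FHD`, then `G`, `H`, `O`
are collinear. -/
theorem rectangle_billiard_collinear (A B C D O E F G H : EuclideanSpace ℝ (Fin 2))
    (hpara : B - A = C - D)
    (hperp : inner ℝ (B - A) (C - B) = (0 : ℝ))
    (hAB : A ≠ B) (hBC : B ≠ C)
    (hO : O = midpoint ℝ A C)
    (hE : E ∈ segment ℝ A B) (hF : F ∈ segment ℝ C D)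
    (hEFO : O ∈ segment ℝ E F)
    (hG : G ∈ segment ℝ B C) (hH : H ∈ segment ℝ D A)
    (hGangle : ∠ E G B = ∠ F G C) (hHangle : ∠ E H A = ∠ F H D) :
    Collinear ℝ {G, H, O} := by
  set u := B - A with hu_def
  set v := C - B with hv_def
  have hu : u ≠ 0 := sub_ne_zero_of_ne hAB.symm
  have hv : v ≠ 0 := sub_ne_zero_of_ne hBC.symm
  have huv : (inner ℝ u v : ℝ) = 0 := hperp
  have hp : 0 < ‖u‖ := norm_pos_iff.mpr hu
  have hq : 0 < ‖v‖ := norm_pos_iff.mpr hv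
  set p := ‖u‖ with hp_def
  set q := ‖v‖ with hq_def
  have hBA : B = A + u := by rw [hu_def]; abel
  have hCA : C = A + (u + v) := by rw [hu_def, hv_def]; abel
  have hDA : D = A + v := by
    have h1 : D = C - u := by rw [hpara]; abel
    rw [h1, hCA]; abel
  -- independence of u, v
  have indep : ∀ a b : ℝ, a • u + b • v = 0 → a = 0 ∧ b = 0 := by
    intro a b hab
    have h1 : (0:ℝ) = a * 1 * p ^ 2 + b * 0 * q ^ 2 := by
      rw [← inner_comb huv a b 1 0, hab, inner_zero_left]
    have h2 : (0:ℝ) = a * 0 * p ^ 2 + b * 1 * q ^ 2 := by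
      rw [← inner_comb huv a b 0 1, hab, inner_zero_left]
    have hp2 : (0:ℝ) < p ^ 2 := pow_pos hp 2
    have hq2 : (0:ℝ) < q ^ 2 := pow_pos hq 2
    constructor
    · rcases mul_eq_zero.mp (show a * p ^ 2 = 0 by linarith [h1]) with h | h
      · exact h
      · exact absurd h hp2.ne'
    · rcases mul_eq_zero.mp (show b * q ^ 2 = 0 by linarith [h2]) with h | h
      · exact h
      · exact absurd h hq2.ne'
  -- coordinates of E
  obtain ⟨a1, t, ha1, ht0, hat, hEdef⟩ := hE
  have ht1 : t ≤ 1 := by linarith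
  have hE' : E = A + t • u := by
    rw [← hEdef, show a1 = 1 - t by linarith, hBA]
    module
  -- coordinates of F
  obtain ⟨c1, s, hc1, hs0, hcs, hFdef⟩ := hF
  have hs1 : s ≤ 1 := by linarith
  have hF0 : F = A + (1 - s) • u + v := by
    rw [← hFdef, show c1 = 1 - s by linarith, hCA, hDA]
    module
  -- O is midpoint of A C
  have hO' : O = A + (2⁻¹ : ℝ) • u + (2⁻¹ : ℝ) • v := by
    rw [hO, hCA, midpoint_eq_smul_add, invOf_eq_inv]
    module
  -- from O ∈ [E,F] deduce s = t
  obtain ⟨m, n, hm, hn, hmn, hOdef⟩ := hEFO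
  have hst : s = t := by
    have hcoord : (m * t + n * (1 - s) - 2⁻¹) • u + (n - 2⁻¹) • v = (0 : EuclideanSpace ℝ (Fin 2)) := by
      have h2 : m • E + n • F - O = 0 := by rw [hOdef]; abel
      rw [hE', hF0, hO', show m = 1 - n by linarith] at h2
      rw [← h2, show m = 1 - n by linarith]
      module
    obtain ⟨hc1', hc2'⟩ := indep _ _ hcoord
    have hn2 : n = 2⁻¹ := by linarith
    have hm2 : m = 2⁻¹ := by linarith
    rw [hm2, hn2] at hc1'
    linarith
  have hF' : F = A + (1 - t) • u + v := by rw [hF0, hst]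
  -- coordinates of G and H
  obtain ⟨b1, f, hb1, hf0, hbsum, hGdef⟩ := hG
  have hf1 : f ≤ 1 := by linarith
  have hG' : G = A + u + f • v := by
    rw [← hGdef, show b1 = 1 - f by linarith, hBA, hCA]
    module
  obtain ⟨d1, e1, hd1, he1, hde, hHdef⟩ := hH
  have hd11 : d1 ≤ 1 := by linarith
  have hH' : H = A + d1 • v := by
    rw [← hHdef, show e1 = 1 - d1 by linarith, hDA]
    module
  -- angle condition at H gives d1 = t
  have hEH : E -ᵥ H = t • u + (-d1) • v := by
    rw [vsub_eq_sub, hE', hH']; module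
  have hAH : A -ᵥ H = (-d1) • v := by
    rw [vsub_eq_sub, hH']; module
  have hFH : F -ᵥ H = (1 - t) • u + (1 - d1) • v := by
    rw [vsub_eq_sub, hF', hH']; module
  have hDH : D -ᵥ H = (1 - d1) • v := by
    rw [vsub_eq_sub, hDA, hH']; module
  have hcosH := congrArg Real.cos hHangle
  rw [EuclideanGeometry.angle, EuclideanGeometry.angle, hEH, hAH, hFH, hDH,
    cos_formula huv, cos_formula huv] at hcosH
  rw [show (-d1) * (-d1) * q ^ 2 = d1 ^ 2 * q ^ 2 by ring,
    show (-d1) ^ 2 * q ^ 2 = d1 ^ 2 * q ^ 2 by ring,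
    show (1 - d1) * (1 - d1) * q ^ 2 = (1 - d1) ^ 2 * q ^ 2 by ring] at hcosH
  have hd1t : d1 = t := key_scalar hp hq ht0 ht1 hd1 hd11 hcosH
  -- angle condition at G gives f = 1 - t
  have hEG : E -ᵥ G = (t - 1) • u + (-f) • v := by
    rw [vsub_eq_sub, hE', hG']; module
  have hBG : B -ᵥ G = (-f) • v := by
    rw [vsub_eq_sub, hBA, hG']; module
  have hFG : F -ᵥ G = (-t) • u + (1 - f) • v := by
    rw [vsub_eq_sub, hF', hG']; module
  have hCG : C -ᵥ G = (1 - f) • v := by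
    rw [vsub_eq_sub, hCA, hG']; module
  have hcosG := congrArg Real.cos hGangle
  rw [EuclideanGeometry.angle, EuclideanGeometry.angle, hEG, hBG, hFG, hCG,
    cos_formula huv, cos_formula huv] at hcosG
  rw [show (-f) * (-f) * q ^ 2 = f ^ 2 * q ^ 2 by ring,
    show (-f) ^ 2 * q ^ 2 = f ^ 2 * q ^ 2 by ring,
    show (t - 1) ^ 2 * p ^ 2 + f ^ 2 * q ^ 2 = (1 - t) ^ 2 * p ^ 2 + f ^ 2 * q ^ 2 by ring,
    show (1 - f) * (1 - f) * q ^ 2 = (1 - f) ^ 2 * q ^ 2 by ring,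
    show (-t) ^ 2 * p ^ 2 + (1 - f) ^ 2 * q ^ 2
      = (1 - (1 - t)) ^ 2 * p ^ 2 + (1 - f) ^ 2 * q ^ 2 by ring] at hcosG
  have hft : f = 1 - t :=
    key_scalar hp hq (by linarith : (0:ℝ) ≤ 1 - t) (by linarith) hf0 hf1 hcosG
  -- conclude collinearity
  rw [collinear_iff_of_mem (show O ∈ ({G, H, O} : Set (EuclideanSpace ℝ (Fin 2))) by
    simp)]
  refine ⟨G - O, ?_⟩
  intro x hx
  simp only [Set.mem_insert_iff, Set.mem_singleton_iff] at hx
  rcases hx with rfl | rfl | rfl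
  · exact ⟨1, by simp⟩
  · refine ⟨-1, ?_⟩
    simp only [vadd_eq_add]
    rw [hH', hG', hO', hd1t, hft]
    module
  · exact ⟨0, by simp⟩
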